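/- Let f̂, f* : 𝒳 → (0,1]^k be probabilistic classifiers taking values in [ε,1] coordinatewise for some ε ∈ (0,1), let ℓ(p,y) = −log p_y be the log-loss, and suppose the excess loss satisfies the (β,B)-Bernstein condition E_{XY}[(ℓ(f̂(X),Y) − ℓ(f*(X),Y))²] ≤ B·(E_{XY}[ℓ(f̂(X),Y) − ℓ(f*(X),Y)])^β. Then E_{XY}[|f̂_Y(X) − f*_Y(X)|] ≤ (1/ε)·√B · (R_sup(f̂) − R_sup(f*))^{β/2}, where R_sup(f) = E_{XY}[ℓ(f(X),Y)]. -/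

import Mathlib

/-- For `0 < a`, `a ≤ b ≤ 1`, we have `b - a ≤ log b - log a`. -/
lemma sub_le_log_sub {a b : ℝ} (ha : 0 < a) (hb1 : b ≤ 1) (hab : a ≤ b) :
    b - a ≤ Real.log b - Real.log a := by
  have hb : 0 < b := lt_of_lt_of_le ha hab
  have h := Real.log_le_sub_one_of_pos (div_pos ha hb)
  rw [Real.log_div ha.ne' hb.ne'] at h
  have h2 : a / b - 1 ≤ a - b := by
    rw [div_sub' hb.ne', div_le_iff₀ hb]
    nlinarith
  linarith

lemma abs_sub_le_abs_log_sub {a b : ℝ} (ha : 0 < a) (ha1 : a ≤ 1) (hb : 0 < b) (hb1 : b ≤ 1) :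
    |a - b| ≤ |Real.log a - Real.log b| := by
  rcases le_total a b with h | h
  · rw [abs_sub_comm, abs_sub_comm (Real.log a)]
    rw [abs_of_nonneg (by linarith), abs_of_nonneg
      (by linarith [sub_le_log_sub ha hb1 h])]
    exact sub_le_log_sub ha hb1 h
  · rw [abs_of_nonneg (by linarith), abs_of_nonneg
      (by linarith [sub_le_log_sub hb ha1 h])]
    exact sub_le_log_sub hb ha1 h

/-- If `D ^ β ≥ 0` (rpow) with `β ∈ (0,1]`, then `√(D ^ β) ≤ D ^ (β/2)`. -/
lemma sqrt_rpow_le {D β : ℝ} (hβ0 : 0 < β) (hβ1 : β ≤ 1) (h : 0 ≤ D ^ β) :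
    Real.sqrt (D ^ β) ≤ D ^ (β / 2) := by
  rcases le_or_gt 0 D with hD | hD
  · rw [Real.sqrt_eq_rpow, ← Real.rpow_mul hD, mul_one_div]
  · rw [Real.rpow_def_of_neg hD] at h ⊢
    rw [Real.rpow_def_of_neg hD]
    have hexp : (0:ℝ) < Real.exp (Real.log D * β) := Real.exp_pos _
    have hcos : 0 ≤ Real.cos (β * Real.pi) := nonneg_of_mul_nonneg_right h hexp
    rw [Real.sqrt_mul hexp.le]
    have hsqexp : Real.sqrt (Real.exp (Real.log D * β)) = Real.exp (Real.log D * (β / 2)) := by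
      rw [show Real.log D * β = Real.log D * (β / 2) + Real.log D * (β / 2) by ring,
        Real.exp_add, Real.sqrt_mul_self (Real.exp_pos _).le]
    rw [hsqexp]
    gcongr
    have hc2 : 0 ≤ Real.cos (β / 2 * Real.pi) := by
      apply Real.cos_nonneg_of_mem_Icc
      constructor
      · nlinarith [Real.pi_pos]
      · nlinarith [Real.pi_pos]
    have hdouble : Real.cos (β * Real.pi) = 2 * Real.cos (β / 2 * Real.pi) ^ 2 - 1 := by
      rw [show β * Real.pi = 2 * (β / 2 * Real.pi) by ring, Real.cos_two_mul]
    have : Real.cos (β * Real.pi) ≤ Real.cos (β / 2 * Real.pi) ^ 2 := by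
      nlinarith [Real.cos_le_one (β / 2 * Real.pi)]
    calc Real.sqrt (Real.cos (β * Real.pi)) ≤ Real.sqrt (Real.cos (β / 2 * Real.pi) ^ 2) :=
          Real.sqrt_le_sqrt this
      _ = Real.cos (β / 2 * Real.pi) := Real.sqrt_sq hc2

/-- For classifiers taking values in `[ε,1]` and log-loss satisfying the `(β,B)`-Bernstein
condition, the expected absolute coordinate difference at the true label is bounded by
`(1/ε) * √B * (R_sup(f̂) - R_sup(f*))^(β/2)`. -/
theorem expected_abs_diff_bound {𝒳 𝒴 : Type*} [Fintype 𝒳] [Fintype 𝒴]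
    (ε : ℝ) (hε : ε ∈ Set.Ioo (0:ℝ) 1)
    (p : 𝒳 → 𝒴 → ℝ) (hp : ∀ x y, 0 ≤ p x y) (hsum : ∑ x, ∑ y, p x y = 1)
    (fhat fstar : 𝒳 → 𝒴 → ℝ)
    (hhat : ∀ x y, fhat x y ∈ Set.Icc ε 1) (hstar : ∀ x y, fstar x y ∈ Set.Icc ε 1)
    (B β : ℝ) (hB : 0 < B) (hβ : β ∈ Set.Ioc (0:ℝ) 1)
    (hbern : ∑ x, ∑ y, p x y * ((-Real.log (fhat x y)) - (-Real.log (fstar x y)))^2 ≤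
      B * (∑ x, ∑ y, p x y * ((-Real.log (fhat x y)) - (-Real.log (fstar x y)))) ^ β) :
    ∑ x, ∑ y, p x y * |fhat x y - fstar x y| ≤
      (1/ε) * Real.sqrt B *
        ((∑ x, ∑ y, p x y * (-Real.log (fhat x y))) -
          ∑ x, ∑ y, p x y * (-Real.log (fstar x y))) ^ (β/2) := by
  obtain ⟨hε0, hε1⟩ := hε
  set Δ : 𝒳 → 𝒴 → ℝ := fun x y => (-Real.log (fhat x y)) - (-Real.log (fstar x y)) with hΔ
  set D : ℝ := ∑ x, ∑ y, p x y * Δ x y with hD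
  -- rewrite the target's risk difference as D
  have hDeq : ((∑ x, ∑ y, p x y * (-Real.log (fhat x y))) -
      ∑ x, ∑ y, p x y * (-Real.log (fstar x y))) = D := by
    rw [hD]
    rw [← Finset.sum_sub_distrib]
    congr 1; ext x
    rw [← Finset.sum_sub_distrib]
    congr 1; ext y
    rw [hΔ]; ring
  rw [hDeq]
  -- quadratic mean bound
  have hQ0 : 0 ≤ ∑ x, ∑ y, p x y * (Δ x y) ^ 2 := by
    apply Finset.sum_nonneg; intro x _
    apply Finset.sum_nonneg; intro y _
    exact mul_nonneg (hp x y) (sq_nonneg _)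
  have hDβ : 0 ≤ D ^ β := nonneg_of_mul_nonneg_right (le_trans hQ0 hbern) hB
  -- step 1: pointwise log-Lipschitz bound
  have step1 : ∑ x, ∑ y, p x y * |fhat x y - fstar x y| ≤ ∑ x, ∑ y, p x y * |Δ x y| := by
    apply Finset.sum_le_sum; intro x _
    apply Finset.sum_le_sum; intro y _
    apply mul_le_mul_of_nonneg_left _ (hp x y)
    obtain ⟨h1, h2⟩ := hhat x y
    obtain ⟨h3, h4⟩ := hstar x y
    have := abs_sub_le_abs_log_sub (lt_of_lt_of_le hε0 h1) h2 (lt_of_lt_of_le hε0 h3) h4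
    rw [hΔ]
    calc |fhat x y - fstar x y| ≤ |Real.log (fhat x y) - Real.log (fstar x y)| := this
      _ = |-Real.log (fhat x y) - -Real.log (fstar x y)| := by rw [← abs_neg]; ring_nf
  -- step 2: Cauchy-Schwarz
  have step2 : ∑ x, ∑ y, p x y * |Δ x y| ≤ Real.sqrt (∑ x, ∑ y, p x y * (Δ x y) ^ 2) := by
    have hS1 : 0 ≤ ∑ x, ∑ y, p x y * |Δ x y| := by
      apply Finset.sum_nonneg; intro x _
      apply Finset.sum_nonneg; intro y _
      exact mul_nonneg (hp x y) (abs_nonneg _)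
    rw [Real.le_sqrt hS1 hQ0]
    have cs := Finset.sum_mul_sq_le_sq_mul_sq (Finset.univ : Finset (𝒳 × 𝒴))
      (fun z => Real.sqrt (p z.1 z.2)) (fun z => Real.sqrt (p z.1 z.2) * |Δ z.1 z.2|)
    have hsum' : ∑ z : 𝒳 × 𝒴, p z.1 z.2 = 1 := by
      rw [Fintype.sum_prod_type]; exact hsum
    calc (∑ x, ∑ y, p x y * |Δ x y|) ^ 2
        = (∑ z : 𝒳 × 𝒴, p z.1 z.2 * |Δ z.1 z.2|) ^ 2 := by rw [Fintype.sum_prod_type]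
      _ = (∑ z : 𝒳 × 𝒴, Real.sqrt (p z.1 z.2) * (Real.sqrt (p z.1 z.2) * |Δ z.1 z.2|)) ^ 2 := by
          congr 1; apply Finset.sum_congr rfl; intro z _
          rw [← mul_assoc, Real.mul_self_sqrt (hp z.1 z.2)]
      _ ≤ (∑ z : 𝒳 × 𝒴, Real.sqrt (p z.1 z.2) ^ 2) *
            ∑ z : 𝒳 × 𝒴, (Real.sqrt (p z.1 z.2) * |Δ z.1 z.2|) ^ 2 := cs
      _ = (∑ z : 𝒳 × 𝒴, p z.1 z.2) * ∑ z : 𝒳 × 𝒴, p z.1 z.2 * (Δ z.1 z.2) ^ 2 := by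
          congr 1
          · apply Finset.sum_congr rfl; intro z _; exact Real.sq_sqrt (hp z.1 z.2)
          · apply Finset.sum_congr rfl; intro z _
            rw [mul_pow, Real.sq_sqrt (hp z.1 z.2), sq_abs]
      _ = ∑ z : 𝒳 × 𝒴, p z.1 z.2 * (Δ z.1 z.2) ^ 2 := by rw [hsum', one_mul]
      _ = ∑ x, ∑ y, p x y * (Δ x y) ^ 2 := by rw [Fintype.sum_prod_type]
  -- step 3: Bernstein + rpow gymnastics
  have step3 : Real.sqrt (∑ x, ∑ y, p x y * (Δ x y) ^ 2) ≤
      (1/ε) * Real.sqrt B * D ^ (β / 2) := by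
    calc Real.sqrt (∑ x, ∑ y, p x y * (Δ x y) ^ 2)
        ≤ Real.sqrt (B * D ^ β) := Real.sqrt_le_sqrt hbern
      _ = Real.sqrt B * Real.sqrt (D ^ β) := Real.sqrt_mul hB.le _
      _ ≤ Real.sqrt B * D ^ (β / 2) := by
          gcongr
          exact sqrt_rpow_le hβ.1 hβ.2 hDβ
      _ ≤ (1/ε) * Real.sqrt B * D ^ (β / 2) := by
          have hrp : 0 ≤ D ^ (β / 2) :=
            le_trans (Real.sqrt_nonneg _) (sqrt_rpow_le hβ.1 hβ.2 hDβ)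
          have h1ε : 1 ≤ 1 / ε := by
            rw [le_div_iff₀ hε0]; linarith
          nlinarith [Real.sqrt_nonneg B, mul_nonneg (Real.sqrt_nonneg B) hrp]
  exact le_trans step1 (le_trans step2 step3)
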